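/- arXiv:2310.05077 — 2 statements merged into one kernel-verified Lean document; each statement's English description precedes it below -/
import Mathlib

section
/- Define, for ε > 0 and δ ∈ [0,1], the discrete distributions P⁰ and P¹ on {0,1,2,3} by P⁰(0)=δ, P⁰(1)=(1−δ)e^ε/(1+e^ε), P⁰(2)=(1−δ)/(1+e^ε), P⁰(3)=0 and P¹(0)=0, P¹(1)=(1−δ)/(1+e^ε), P¹(2)=(1−δ)e^ε/(1+e^ε), P¹(3)=δ. Then both P⁰ and P¹ are probability distributions, and for every subset S ⊆ {1,2} one has P⁰(S) ≤ e^ε·P¹(S) + δ and P¹(S) ≤ e^ε·P⁰(S) + δ; moreover P⁰({0}) − e^ε·P¹({0}) = δ. -/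
/-- Canonical worst-case output distribution `P⁰` of an `(ε,δ)`-DP mechanism. -/
noncomputable def P0 (ε δ : ℝ) : Fin 4 → ℝ :=
  ![δ, (1 - δ) * Real.exp ε / (1 + Real.exp ε), (1 - δ) / (1 + Real.exp ε), 0]

/-- Canonical worst-case output distribution `P¹` of an `(ε,δ)`-DP mechanism. -/
noncomputable def P1 (ε δ : ℝ) : Fin 4 → ℝ :=
  ![0, (1 - δ) / (1 + Real.exp ε), (1 - δ) * Real.exp ε / (1 + Real.exp ε), δ]

theorem stmt14 (ε δ : ℝ) (hε : 0 < ε) (hδ0 : 0 ≤ δ) (hδ1 : δ ≤ 1) :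
    ((∀ o, 0 ≤ P0 ε δ o) ∧ ∑ o, P0 ε δ o = 1)
    ∧ ((∀ o, 0 ≤ P1 ε δ o) ∧ ∑ o, P1 ε δ o = 1)
    ∧ (∀ S : Finset (Fin 4), S ⊆ {1, 2} →
        (∑ o ∈ S, P0 ε δ o ≤ Real.exp ε * ∑ o ∈ S, P1 ε δ o + δ
          ∧ ∑ o ∈ S, P1 ε δ o ≤ Real.exp ε * ∑ o ∈ S, P0 ε δ o + δ))
    ∧ P0 ε δ 0 - Real.exp ε * P1 ε δ 0 = δ := by
  have hE : (1:ℝ) ≤ Real.exp ε := by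
    have := Real.exp_le_exp.mpr hε.le
    simpa using Real.one_le_exp hε.le
  have hEpos : (0:ℝ) < Real.exp ε := Real.exp_pos ε
  have hden : (0:ℝ) < 1 + Real.exp ε := by linarith
  have h1δ : 0 ≤ 1 - δ := by linarith
  have hnn1 : 0 ≤ (1 - δ) * Real.exp ε / (1 + Real.exp ε) :=
    div_nonneg (mul_nonneg h1δ hEpos.le) hden.le
  have hnn2 : 0 ≤ (1 - δ) / (1 + Real.exp ε) := div_nonneg h1δ hden.le
  refine ⟨⟨?_, ?_⟩, ⟨?_, ?_⟩, ?_, ?_⟩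
  · intro o; fin_cases o <;> simp [P0] <;> [exact hδ0; exact hnn1; exact hnn2]
  · simp [P0, Fin.sum_univ_four]; field_simp; ring
  · intro o; fin_cases o <;> simp [P1] <;> [exact hnn2; exact hnn1; exact hδ0]
  · simp [P1, Fin.sum_univ_four]; field_simp; ring
  · intro S hS
    set E := Real.exp ε with hEdef
    set a := (1 - δ) / (1 + E) with hadef
    set b := (1 - δ) * E / (1 + E) with hbdef
    have hba : b = E * a := by rw [hadef, hbdef]; ring
    have hsum : a + b ≤ E * (a + b) := le_mul_of_one_le_left (add_nonneg hnn2 hnn1) hE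
    have hab : a ≤ E * b := by
      calc a ≤ E * a := le_mul_of_one_le_left hnn2 hE
        _ = b := hba.symm
        _ ≤ E * b := le_mul_of_one_le_left hnn1 hE
    have hS' : S ∈ ({1, 2} : Finset (Fin 4)).powerset := Finset.mem_powerset.mpr hS
    fin_cases hS' <;> simp [P0, P1, ← hadef, ← hbdef, ← hEdef] <;>
      first
        | exact hδ0
        | (constructor <;> nlinarith [hba, hsum, hab, hδ0])
  · simp [P0, P1]
end

section
/- With P⁰, P¹ as the canonical (ε,δ) distributions on {0,1,2,3} and their i-fold products (P⁰)^i, (P¹)^i on {0,1,2,3}^i, define Dt_{ε'}(P,Q) = max over events S of (P(S) − e^{ε'}·Q(S)). Then for 0 ≤ j ≤ i, Dt_{(i−2j)ε}((P⁰)^i,(P¹)^i) = 1 − (1−δ)^i + (1−δ)^i · Σ_{l=0}^{j−1} C(i,l)·(e^{ε(i−l)} − e^{ε(i−2j+l)}) / (1+e^ε)^i. -/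
open Finset

/-- Hockey-stick divergence `Dt_{ε'}(P,Q) = max_{S} (P(S) − e^{ε'}·Q(S))` on a finite set. -/
noncomputable def Dt {Ω : Type*} [Fintype Ω] (ε' : ℝ) (P Q : Ω → ℝ) : ℝ :=
  ⨆ S : Finset Ω, (∑ o ∈ S, P o - Real.exp ε' * ∑ o ∈ S, Q o)

lemma sup_sum_eq {Ω : Type*} [Fintype Ω] (f : Ω → ℝ) :
    (⨆ S : Finset Ω, ∑ o ∈ S, f o) = ∑ o, max (f o) 0 := by
  have hm : ∀ o : Ω, max (f o) 0 = if 0 < f o then f o else 0 := by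
    intro o; split
    · exact max_eq_left (le_of_lt ‹_›)
    · exact max_eq_right (not_lt.mp ‹_›)
  apply le_antisymm
  · apply ciSup_le
    intro S
    calc ∑ o ∈ S, f o ≤ ∑ o ∈ S, max (f o) 0 := sum_le_sum fun o _ => le_max_left _ _
      _ ≤ ∑ o, max (f o) 0 :=
        sum_le_sum_of_subset_of_nonneg (subset_univ S) fun o _ _ => le_max_right _ _
  · have h2 : ∑ o, max (f o) 0 = ∑ o ∈ univ.filter (fun o => 0 < f o), f o := by
      rw [sum_filter]; exact sum_congr rfl fun o _ => hm o
    rw [h2]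
    exact le_ciSup (Set.Finite.bddAbove (Set.finite_range (fun S : Finset Ω => ∑ o ∈ S, f o))) _

lemma sum_prod_pi {n : ℕ} {κ : Type*} [Fintype κ] (h : κ → ℝ) :
    ∑ o : Fin n → κ, ∏ t, h (o t) = (∑ k, h k) ^ n := by
  rw [← Fintype.piFinset_univ, ← Finset.prod_univ_sum]
  simp

/-- Product over a two-valued outcome. -/
lemma prod_two {i : ℕ} (h4 : Fin 4 → ℝ) (o : Fin i → Fin 4)
    (ho : ∀ t, o t = 1 ∨ o t = 2) :
    ∏ t, h4 (o t)
      = h4 1 ^ (i - (univ.filter fun t => o t = 2).card)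
          * h4 2 ^ (univ.filter fun t => o t = 2).card := by
  rw [← Finset.prod_filter_mul_prod_filter_not univ (fun t => o t = 2)]
  have h1 : ∏ t ∈ univ.filter (fun t => o t = 2), h4 (o t)
      = h4 2 ^ (univ.filter fun t => o t = 2).card := by
    rw [← prod_const]
    exact prod_congr rfl fun t ht => by rw [(mem_filter.mp ht).2]
  have h2 : ∏ t ∈ univ.filter (fun t => ¬ o t = 2), h4 (o t)
      = h4 1 ^ (i - (univ.filter fun t => o t = 2).card) := by
    have hc : (univ.filter fun t => ¬ o t = 2).card
        = i - (univ.filter fun t => o t = 2).card := by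
      have := Finset.card_filter_add_card_filter_not
        (s := (univ : Finset (Fin i))) (p := fun t => o t = 2)
      simp only [Finset.card_univ, Fintype.card_fin] at this
      omega
    rw [← hc, ← prod_const]
    refine prod_congr rfl fun t ht => ?_
    rcases ho t with h | h
    · rw [h]
    · exact absurd h (mem_filter.mp ht).2
  rw [h1, h2, mul_comm]

/-- Closed form for the hockey-stick divergence of `i`-fold products of the canonical
`(ε,δ)` distributions (Kairouz–Oh–Viswanath). -/
theorem stmt15 (ε δ : ℝ) (hε : 0 < ε) (hδ0 : 0 ≤ δ) (hδ1 : δ ≤ 1)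
    (i j : ℕ) (hi : 1 ≤ i) (hj : j ≤ i) :
    Dt (((i : ℝ) - 2 * (j : ℝ)) * ε)
        (fun o : Fin i → Fin 4 => ∏ t, P0 ε δ (o t))
        (fun o : Fin i → Fin 4 => ∏ t, P1 ε δ (o t))
      = 1 - (1 - δ) ^ i
        + (1 - δ) ^ i
            * ∑ l ∈ Finset.range j,
                (i.choose l : ℝ)
                  * (Real.exp (ε * ((i : ℝ) - (l : ℝ)))
                      - Real.exp (ε * ((i : ℝ) - 2 * (j : ℝ) + (l : ℝ))))
                  / (1 + Real.exp ε) ^ i := by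
  have hexp : (0:ℝ) < Real.exp ε := Real.exp_pos ε
  have h1e : (0:ℝ) < 1 + Real.exp ε := by positivity
  have h1e' : (1:ℝ) + Real.exp ε ≠ 0 := ne_of_gt h1e
  have h1δ : (0:ℝ) ≤ 1 - δ := by linarith
  set E : ℝ := Real.exp (((i : ℝ) - 2 * (j : ℝ)) * ε) with hEdef
  have hE0 : 0 < E := Real.exp_pos _
  set a : ℝ := (1 - δ) * Real.exp ε / (1 + Real.exp ε) with hadef
  set b : ℝ := (1 - δ) / (1 + Real.exp ε) with hbdef
  have ha0 : 0 ≤ a := by positivity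
  have hb0 : 0 ≤ b := by positivity
  have hf0 : ∀ k, 0 ≤ P0 ε δ k := by
    intro k; fin_cases k <;> simp [P0] <;> positivity
  have hg0 : ∀ k, 0 ≤ P1 ε δ k := by
    intro k; fin_cases k <;> simp [P1] <;> positivity
  have hfprod : ∀ o : Fin i → Fin 4, 0 ≤ ∏ t, P0 ε δ (o t) :=
    fun o => prod_nonneg fun t _ => hf0 _
  have hgprod : ∀ o : Fin i → Fin 4, 0 ≤ ∏ t, P1 ε δ (o t) :=
    fun o => prod_nonneg fun t _ => hg0 _
  -- value of products on two-valued outcomes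
  have hP0two : ∀ o : Fin i → Fin 4, (∀ t, o t = 1 ∨ o t = 2) →
      ∏ t, P0 ε δ (o t)
        = a ^ (i - (univ.filter fun t => o t = 2).card)
            * b ^ (univ.filter fun t => o t = 2).card := by
    intro o ho
    have := prod_two (P0 ε δ) o ho
    simpa [P0] using this
  have hP1two : ∀ o : Fin i → Fin 4, (∀ t, o t = 1 ∨ o t = 2) →
      ∏ t, P1 ε δ (o t)
        = b ^ (i - (univ.filter fun t => o t = 2).card)
            * a ^ (univ.filter fun t => o t = 2).card := by
    intro o ho
    have := prod_two (P1 ε δ) o ho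
    simpa [P1] using this
  -- algebraic closed form of `a^(i-l)*b^l - E*(b^(i-l)*a^l)` given `l ≤ i`
  have hab : ∀ l : ℕ, l ≤ i →
      a ^ (i - l) * b ^ l - E * (b ^ (i - l) * a ^ l)
        = (1 - δ) ^ i / (1 + Real.exp ε) ^ i
            * (Real.exp (ε * ((i : ℝ) - (l : ℝ)))
                - Real.exp (ε * ((i : ℝ) - 2 * (j : ℝ) + (l : ℝ)))) := by
    intro l hl
    have hcast : ((i - l : ℕ) : ℝ) = (i : ℝ) - (l : ℝ) := by
      push_cast [Nat.cast_sub hl]; ring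
    have hX : Real.exp ε ^ (i - l) = Real.exp (ε * ((i : ℝ) - (l : ℝ))) := by
      rw [← Real.exp_nat_mul, hcast, mul_comm]
    have hY : E * Real.exp ε ^ l = Real.exp (ε * ((i : ℝ) - 2 * (j : ℝ) + (l : ℝ))) := by
      rw [← Real.exp_nat_mul, hEdef, ← Real.exp_add]
      congr 1; ring
    have e1 : a ^ (i - l) * b ^ l
        = (1 - δ) ^ i / (1 + Real.exp ε) ^ i * Real.exp (ε * ((i : ℝ) - (l : ℝ))) := by
      have h1 : a ^ (i - l) * b ^ l
          = ((1 - δ) ^ (i - l) * (1 - δ) ^ l) * Real.exp ε ^ (i - l)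
              / ((1 + Real.exp ε) ^ (i - l) * (1 + Real.exp ε) ^ l) := by
        rw [hadef, hbdef, div_pow, div_pow, mul_pow]; ring
      rw [h1, ← pow_add, ← pow_add, Nat.sub_add_cancel hl, hX]; ring
    have e2 : E * (b ^ (i - l) * a ^ l)
        = (1 - δ) ^ i / (1 + Real.exp ε) ^ i
            * Real.exp (ε * ((i : ℝ) - 2 * (j : ℝ) + (l : ℝ))) := by
      have h1 : E * (b ^ (i - l) * a ^ l)
          = ((1 - δ) ^ (i - l) * (1 - δ) ^ l) * (E * Real.exp ε ^ l)
              / ((1 + Real.exp ε) ^ (i - l) * (1 + Real.exp ε) ^ l) := by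
        rw [hadef, hbdef, div_pow, div_pow, mul_pow]; ring
      rw [h1, ← pow_add, ← pow_add, Nat.sub_add_cancel hl, hY]; ring
    rw [e1, e2]; ring
  have hfin4 : ∀ k : Fin 4, k ≠ 3 → k ≠ 0 → k = 1 ∨ k = 2 := by decide
  -- the key pointwise identity
  have key : ∀ o : Fin i → Fin 4,
      max ((∏ t, P0 ε δ (o t)) - E * ∏ t, P1 ε δ (o t)) 0
        = (∏ t, P0 ε δ (o t))
          - (if ∀ t, o t = 1 ∨ o t = 2 then ∏ t, P0 ε δ (o t) else 0)
          + (if (∀ t, o t = 1 ∨ o t = 2) ∧ (univ.filter fun t => o t = 2).card < j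
              then (∏ t, P0 ε δ (o t)) - E * ∏ t, P1 ε δ (o t) else 0) := by
    intro o
    by_cases h12 : ∀ t, o t = 1 ∨ o t = 2
    · have hl_le : (univ.filter fun t => o t = 2).card ≤ i := by
        calc (univ.filter fun t => o t = 2).card ≤ (univ : Finset (Fin i)).card :=
              card_filter_le _ _
          _ = i := by simp
      set l := (univ.filter fun t => o t = 2).card with hldef
      by_cases hlj : l < j
      · rw [if_pos h12, if_pos ⟨h12, hlj⟩]
        have hge : 0 ≤ (∏ t, P0 ε δ (o t)) - E * ∏ t, P1 ε δ (o t) := by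
          rw [hP0two o h12, hP1two o h12, ← hldef, hab l hl_le]
          have hexple : Real.exp (ε * ((i : ℝ) - 2 * (j : ℝ) + (l : ℝ)))
              ≤ Real.exp (ε * ((i : ℝ) - (l : ℝ))) := by
            apply Real.exp_le_exp.mpr
            have hcl : (l : ℝ) < (j : ℝ) := by exact_mod_cast hlj
            nlinarith
          have hC : (0:ℝ) ≤ (1 - δ) ^ i / (1 + Real.exp ε) ^ i := by positivity
          exact mul_nonneg hC (by linarith)
        rw [max_eq_left hge]; ring
      · rw [if_pos h12, if_neg (by tauto)]
        have hle : (∏ t, P0 ε δ (o t)) - E * ∏ t, P1 ε δ (o t) ≤ 0 := by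
          rw [hP0two o h12, hP1two o h12, ← hldef, hab l hl_le]
          have hexple : Real.exp (ε * ((i : ℝ) - (l : ℝ)))
              ≤ Real.exp (ε * ((i : ℝ) - 2 * (j : ℝ) + (l : ℝ))) := by
            apply Real.exp_le_exp.mpr
            have hcl : (j : ℝ) ≤ (l : ℝ) := by exact_mod_cast not_lt.mp hlj
            nlinarith
          have hC : (0:ℝ) ≤ (1 - δ) ^ i / (1 + Real.exp ε) ^ i := by positivity
          exact mul_nonpos_of_nonneg_of_nonpos hC (by linarith)
        rw [max_eq_right hle]; ring
    · rw [if_neg h12, if_neg (by tauto)]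
      by_cases h3 : ∃ t, o t = 3
      · obtain ⟨t, ht⟩ := h3
        have hp0 : ∏ t, P0 ε δ (o t) = 0 :=
          prod_eq_zero (mem_univ t) (by rw [ht]; simp [P0])
        rw [hp0]
        have hle : (0:ℝ) - E * ∏ t, P1 ε δ (o t) ≤ 0 := by
          have := hgprod o; nlinarith
        rw [max_eq_right hle]; ring
      · have h0 : ∃ t, o t = 0 := by
          by_contra h0
          push_neg at h0 h3
          exact h12 fun t => hfin4 (o t) (h3 t) (h0 t)
        obtain ⟨t, ht⟩ := h0
        have hp1 : ∏ t, P1 ε δ (o t) = 0 :=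
          prod_eq_zero (mem_univ t) (by rw [ht]; simp [P1])
        rw [hp1, mul_zero, sub_zero, max_eq_left (hfprod o)]; ring
  -- rewrite the divergence as a sum of positive parts
  unfold Dt
  rw [← hEdef]
  simp_rw [Finset.mul_sum, ← Finset.sum_sub_distrib]
  rw [sup_sum_eq]
  simp_rw [key]
  rw [Finset.sum_add_distrib, Finset.sum_sub_distrib]
  -- first sum: total mass is 1
  have hS1 : ∑ o : Fin i → Fin 4, ∏ t, P0 ε δ (o t) = 1 := by
    rw [sum_prod_pi]
    have : ∑ k, P0 ε δ k = 1 := by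
      simp [Fin.sum_univ_four, P0]
      field_simp
      ring
    rw [this, one_pow]
  -- second sum: mass of two-valued outcomes
  have hab1 : a + b = 1 - δ := by
    rw [hadef, hbdef]; field_simp; ring
  have hS2 : ∑ o : Fin i → Fin 4,
      (if ∀ t, o t = 1 ∨ o t = 2 then ∏ t, P0 ε δ (o t) else 0) = (1 - δ) ^ i := by
    set h2 : Fin 4 → ℝ := fun k => if k = 1 ∨ k = 2 then P0 ε δ k else 0 with hh2
    have hpt : ∀ o : Fin i → Fin 4,
        (if ∀ t, o t = 1 ∨ o t = 2 then ∏ t, P0 ε δ (o t) else 0)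
          = ∏ t, h2 (o t) := by
      intro o
      by_cases h : ∀ t, o t = 1 ∨ o t = 2
      · rw [if_pos h]
        refine prod_congr rfl fun t _ => ?_
        have : h2 (o t) = P0 ε δ (o t) := by simp only [hh2]; exact if_pos (h t)
        rw [this]
      · rw [if_neg h]
        obtain ⟨t, ht⟩ := not_forall.mp h
        refine (prod_eq_zero (mem_univ t) ?_).symm
        simp only [hh2]
        exact if_neg ht
    rw [Finset.sum_congr rfl fun o _ => hpt o, sum_prod_pi]
    have : ∑ k, h2 k = a + b := by
      simp [Fin.sum_univ_four, hh2, P0, hadef, hbdef]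
    rw [this, hab1]
  -- third sum
  have hS3 : ∑ o : Fin i → Fin 4,
      (if (∀ t, o t = 1 ∨ o t = 2) ∧ (univ.filter fun t => o t = 2).card < j
          then (∏ t, P0 ε δ (o t)) - E * ∏ t, P1 ε δ (o t) else 0)
      = ∑ l ∈ Finset.range j,
          (i.choose l : ℝ) * ((1 - δ) ^ i / (1 + Real.exp ε) ^ i
            * (Real.exp (ε * ((i : ℝ) - (l : ℝ)))
                - Real.exp (ε * ((i : ℝ) - 2 * (j : ℝ) + (l : ℝ))))) := by
    set G : ℕ → ℝ := fun l => (1 - δ) ^ i / (1 + Real.exp ε) ^ i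
        * (Real.exp (ε * ((i : ℝ) - (l : ℝ)))
            - Real.exp (ε * ((i : ℝ) - 2 * (j : ℝ) + (l : ℝ)))) with hGdef
    have hpt : ∀ o : Fin i → Fin 4,
        (if (∀ t, o t = 1 ∨ o t = 2) ∧ (univ.filter fun t => o t = 2).card < j
            then (∏ t, P0 ε δ (o t)) - E * ∏ t, P1 ε δ (o t) else 0)
          = (if (∀ t, o t = 1 ∨ o t = 2)
              then (if (univ.filter fun t => o t = 2).card < j
                then G ((univ.filter fun t => o t = 2).card) else 0) else 0) := by
      intro o
      by_cases h1 : ∀ t, o t = 1 ∨ o t = 2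
      · by_cases h2 : (univ.filter fun t => o t = 2).card < j
        · rw [if_pos ⟨h1, h2⟩, if_pos h1, if_pos h2, hP0two o h1, hP1two o h1,
            hab _ (by calc (univ.filter fun t => o t = 2).card
                ≤ (univ : Finset (Fin i)).card := card_filter_le _ _
              _ = i := by simp), hGdef]
        · rw [if_neg (by tauto), if_pos h1, if_neg h2]
      · rw [if_neg (by tauto), if_neg h1]
    simp_rw [hpt]
    rw [← Finset.sum_filter]
    have hbij : ∑ o ∈ univ.filter (fun o : Fin i → Fin 4 => ∀ t, o t = 1 ∨ o t = 2),
        (if (univ.filter fun t => o t = 2).card < j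
          then G ((univ.filter fun t => o t = 2).card) else 0)
        = ∑ s : Finset (Fin i), (if s.card < j then G s.card else 0) := by
      refine Finset.sum_nbij' (fun o => univ.filter fun t => o t = 2)
        (fun s => fun t => if t ∈ s then (2 : Fin 4) else 1) ?_ ?_ ?_ ?_ ?_
      · intro o _; exact mem_univ _
      · intro s _
        simp only [mem_filter, mem_univ, true_and]
        intro t
        by_cases ht : t ∈ s <;> simp [ht]
      · intro o ho
        funext t
        simp only [mem_filter, mem_univ, true_and]
        rcases (mem_filter.mp ho).2 t with h | h
        · rw [h]; simp
        · rw [h]; simp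
      · intro s _
        ext t
        simp only [mem_filter, mem_univ, true_and]
        by_cases ht : t ∈ s <;> simp [ht]
      · intro o _; rfl
    rw [hbij, ← Finset.powerset_univ, Finset.sum_powerset]
    have hcardu : (univ : Finset (Fin i)).card = i := by simp
    rw [hcardu]
    have hinner : ∀ l ∈ Finset.range (i + 1),
        (∑ t ∈ Finset.powersetCard l (univ : Finset (Fin i)),
          (if t.card < j then G t.card else 0))
        = if l < j then (i.choose l : ℝ) * G l else 0 := by
      intro l _
      rw [Finset.sum_powersetCard l (univ : Finset (Fin i))
        (fun m => if m < j then G m else 0), hcardu]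
      split <;> simp [nsmul_eq_mul]
    rw [Finset.sum_congr rfl hinner, ← Finset.sum_filter]
    have hfe : (Finset.range (i + 1)).filter (fun l => l < j) = Finset.range j := by
      ext x
      simp only [mem_filter, mem_range]
      omega
    rw [hfe]
  rw [hS1, hS2, hS3]
  have hfin : ∀ l ∈ Finset.range j,
      (i.choose l : ℝ) * ((1 - δ) ^ i / (1 + Real.exp ε) ^ i
        * (Real.exp (ε * ((i : ℝ) - (l : ℝ)))
            - Real.exp (ε * ((i : ℝ) - 2 * (j : ℝ) + (l : ℝ)))))
      = (1 - δ) ^ i * ((i.choose l : ℝ)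
          * (Real.exp (ε * ((i : ℝ) - (l : ℝ)))
              - Real.exp (ε * ((i : ℝ) - 2 * (j : ℝ) + (l : ℝ))))
          / (1 + Real.exp ε) ^ i) := fun l _ => by ring
  rw [Finset.sum_congr rfl hfin, ← Finset.mul_sum]
end
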